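/- Let a and b be two distinct symbols. The paperfolding word on {a, b} satisfies condition ♠ with constant c = 13. -/

import Mathlib

open scoped BigOperators

/-- A `p`-adic floor function: values in `ℤ[1/p]`, `‖x - s x‖_p < 1`, `s 0 = 0`,
and `s` is constant on open unit balls. -/
structure PadicFloor (p : ℕ) [Fact p.Prime] where
  toFun : ℚ_[p] → ℚ_[p]
  zinv : ∀ x, ∃ (m : ℤ) (k : ℕ), toFun x = (m : ℚ_[p]) / (p : ℚ_[p]) ^ k
  norm_sub_lt : ∀ x, ‖x - toFun x‖ < 1
  map_zero' : toFun 0 = 0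
  eq_of_close : ∀ x y, ‖x - y‖ < 1 → toFun x = toFun y

/-- `l` is a prefix of the infinite word `ω` (indexed from 0). -/
def IsPrefixOf {A : Type*} (l : List A) (ω : ℕ → A) : Prop :=
  ∀ (i : ℕ) (h : i < l.length), l.get ⟨i, h⟩ = ω i

/-- `ω` is ultimately periodic. -/
def UltPeriodic {A : Type*} (ω : ℕ → A) : Prop :=
  ∃ N k : ℕ, 0 < k ∧ ∀ n, N ≤ n → ω (n + k) = ω n

/-- Condition ♠ with constant `c`. -/
def Spade {A : Type*} (ω : ℕ → A) (c : ℝ) : Prop :=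
  ¬ UltPeriodic ω ∧
  ∃ W U V : ℕ → List A,
    (∀ n, U n ≠ []) ∧
    (∀ n, IsPrefixOf (W n ++ (U n ++ (V n ++ U n))) ω) ∧
    (∀ n, ((V n).length : ℝ) ≤ c * (U n).length) ∧
    (∀ n, ((W n).length : ℝ) ≤ c * (U n).length) ∧
    (∀ m : ℕ, ∃ n, m < (U n).length)

/-- Condition ♣ with constant `c`. -/
def Club {A : Type*} (ω : ℕ → A) (c : ℝ) : Prop :=
  ¬ UltPeriodic ω ∧
  ∃ W U V : ℕ → List A,
    (∀ n, U n ≠ []) ∧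
    (∀ n, IsPrefixOf (W n ++ (U n ++ (V n ++ (U n).reverse))) ω) ∧
    (∀ n, ((V n).length : ℝ) ≤ c * (U n).length) ∧
    (∀ n, ((W n).length : ℝ) ≤ c * (U n).length) ∧
    (∀ m : ℕ, ∃ n, m < (U n).length)

/-- The paperfolding word on the alphabet `{a, b}`: for `n ≥ 1` write `n = 2^k·m` with `m`
odd; the letter `f_n` is `a` iff `m ≡ 1 (mod 4)`. Here `paperfoldingWord a b i = f_{i+1}`. -/
def paperfoldingWord {A : Type*} (a b : A) : ℕ → A := fun i =>
  if ((i + 1) / 2 ^ (padicValNat 2 (i + 1))) % 4 = 1 then a else b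


namespace PFAux

/-- The "letter code" of a positive integer: odd part mod 4. -/
def L (n : ℕ) : ℕ := (n / 2 ^ padicValNat 2 n) % 4

lemma padicVal_pow_mul_odd (k m : ℕ) (hm : Odd m) :
    padicValNat 2 (2 ^ k * m) = k := by
  have hm0 : m ≠ 0 := by rintro rfl; simp [Nat.odd_iff] at hm
  rw [padicValNat.mul (by positivity) hm0, padicValNat.prime_pow,
    padicValNat.eq_zero_of_not_dvd (by rwa [Nat.two_dvd_ne_zero, ← Nat.odd_iff])]
  omega

lemma L_pow_mul_odd (k m : ℕ) (hm : Odd m) : L (2 ^ k * m) = m % 4 := by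
  unfold L
  rw [padicVal_pow_mul_odd k m hm, Nat.mul_div_cancel_left _ (by positivity)]

lemma exists_odd (n : ℕ) (hn : n ≠ 0) :
    ∃ m, Odd m ∧ n = 2 ^ padicValNat 2 n * m := by
  have hd : 2 ^ padicValNat 2 n ∣ n := pow_padicValNat_dvd
  refine ⟨n / 2 ^ padicValNat 2 n, ?_, (Nat.mul_div_cancel' hd).symm⟩
  rw [Nat.odd_iff]
  by_contra h
  have h2 : 2 ∣ n / 2 ^ padicValNat 2 n := Nat.dvd_of_mod_eq_zero (by omega)
  obtain ⟨c, hc⟩ := h2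
  have hn' : n = 2 ^ (padicValNat 2 n + 1) * c := by
    have h3 : n = 2 ^ padicValNat 2 n * (2 * c) := by
      conv_lhs => rw [← Nat.mul_div_cancel' hd, hc]
    conv_lhs => rw [h3]
    rw [pow_succ]; ring
  exact pow_succ_padicValNat_not_dvd hn ⟨c, hn'⟩

lemma L_odd (m : ℕ) (hm : Odd m) : L m = m % 4 := by
  have := L_pow_mul_odd 0 m hm; simpa using this

lemma L_two_mul (n : ℕ) (hn : n ≠ 0) : L (2 * n) = L n := by
  obtain ⟨m, hm, heq⟩ := exists_odd n hn
  have h2 : 2 * n = 2 ^ (padicValNat 2 n + 1) * m := by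
    conv_lhs => rw [heq]
    rw [pow_succ]; ring
  rw [h2, heq, L_pow_mul_odd _ _ hm, L_pow_mul_odd _ _ hm]

lemma L_mem (n : ℕ) (hn : n ≠ 0) : L n = 1 ∨ L n = 3 := by
  obtain ⟨m, hm, heq⟩ := exists_odd n hn
  rw [heq, L_pow_mul_odd _ _ hm]
  rw [Nat.odd_iff] at hm
  omega

lemma L_add_pow (m N : ℕ) (hm : m ≠ 0) (hN : 2 ≤ N)
    (hv : padicValNat 2 m + 2 ≤ N) : L (m + 2 ^ N) = L m := by
  obtain ⟨m', hm', hmeq⟩ := exists_odd m hm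
  set k := padicValNat 2 m with hk
  have hsplit : m + 2 ^ N = 2 ^ k * (m' + 4 * 2 ^ (N - k - 2)) := by
    have h1 : 2 ^ N = 2 ^ k * (4 * 2 ^ (N - k - 2)) := by
      have h4 : (4 : ℕ) = 2 ^ 2 := by norm_num
      rw [h4, ← pow_add, ← pow_add]
      congr 1
      omega
    rw [hmeq, h1]; ring
  have hodd2 : Odd (m' + 4 * 2 ^ (N - k - 2)) := by
    rcases hm' with ⟨r, hr⟩
    exact ⟨r + 2 * 2 ^ (N - k - 2), by omega⟩
  rw [hsplit, L_pow_mul_odd _ _ hodd2, hmeq, L_pow_mul_odd _ _ hm',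
    Nat.add_mul_mod_self_left]

lemma L_pow_mul' (j n : ℕ) (hn : n ≠ 0) : L (2 ^ j * n) = L n := by
  induction j with
  | zero => simp
  | succ j ih =>
    have : 2 ^ (j + 1) * n = 2 * (2 ^ j * n) := by ring
    rw [this, L_two_mul _ (by positivity), ih]

lemma period_iterate {M k : ℕ} (h : ∀ m, M ≤ m → L (m + k) = L m) :
    ∀ t m, M ≤ m → L (m + t * k) = L m := by
  intro t
  induction t with
  | zero => simp
  | succ t ih =>
    intro m hm
    have h1 : m + (t + 1) * k = m + t * k + k := by ring
    rw [h1, h (m + t * k) (le_trans hm (Nat.le_add_right _ _)), ih m hm]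

lemma period_everywhere {N k : ℕ} (h : ∀ m, N ≤ m → L (m + k) = L m) :
    ∀ m, m ≠ 0 → L (m + k) = L m := by
  intro m hm
  have hNle : N ≤ 2 ^ N * m := by
    calc N ≤ 2 ^ N := (Nat.lt_two_pow_self (n := N)).le
    _ ≤ 2 ^ N * m := Nat.le_mul_of_pos_right _ (by omega)
  calc L (m + k) = L (2 ^ N * (m + k)) := (L_pow_mul' _ _ (by omega)).symm
    _ = L (2 ^ N * m + 2 ^ N * k) := by ring_nf
    _ = L (2 ^ N * m) := period_iterate h (2 ^ N) _ hNle
    _ = L m := L_pow_mul' _ _ hm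

lemma L_one : L 1 = 1 := by
  have := L_odd 1 (by decide)
  simpa using this

lemma no_period : ∀ k, 0 < k → ¬ (∀ m, m ≠ 0 → L (m + k) = L m) := by
  intro k
  induction k using Nat.strong_induction_on with
  | _ k ih =>
    intro hk h
    rcases Nat.even_or_odd k with he | ho
    · obtain ⟨k', rfl⟩ := he
      have hk' : 0 < k' := by omega
      refine ih k' (by omega) hk' ?_
      intro m hm
      have h2 := h (2 * m) (by omega)
      have he2 : 2 * m + (k' + k') = 2 * (m + k') := by ring
      rw [he2, L_two_mul _ (by omega), L_two_mul _ hm] at h2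
      exact h2
    · have h1 : L (1 + k) = L 1 := h 1 one_ne_zero
      have h2 : L (1 + k + k) = L (1 + k) := h (1 + k) (by omega)
      have h3 : L (1 + k + k) = (1 + k + k) % 4 := by
        refine L_odd _ ?_
        rw [Nat.odd_iff] at ho ⊢
        omega
      rw [Nat.odd_iff] at ho
      rw [h1, L_one] at h2
      omega

end PFAux

lemma pw_eq_L {A : Type*} (a b : A) (i : ℕ) :
    paperfoldingWord a b i = if PFAux.L (i + 1) = 1 then a else b := rfl

lemma L_eq_of_pw_eq {A : Type*} {a b : A} (hab : a ≠ b) (i j : ℕ)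
    (h : paperfoldingWord a b i = paperfoldingWord a b j) :
    PFAux.L (i + 1) = PFAux.L (j + 1) := by
  rw [pw_eq_L, pw_eq_L] at h
  rcases PFAux.L_mem (i + 1) (Nat.succ_ne_zero i) with h1 | h1 <;>
  rcases PFAux.L_mem (j + 1) (Nat.succ_ne_zero j) with h2 | h2
  · rw [h1, h2]
  · rw [h1, h2] at h; simp at h; exact absurd h hab
  · rw [h1, h2] at h; simp at h; exact absurd h.symm hab
  · rw [h1, h2]

lemma pw_shift {A : Type*} (a b : A) (n j : ℕ) (hj : j < 2 ^ n) :
    paperfoldingWord a b (8 * 2 ^ n + j) = paperfoldingWord a b (4 * 2 ^ n + j) := by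
  have hB : 0 < 2 ^ n := by positivity
  set m := 4 * 2 ^ n + j + 1 with hm
  have hv : padicValNat 2 m + 2 ≤ n + 2 := by
    by_contra hcon
    have hd : 2 ^ (n + 1) ∣ m :=
      (pow_dvd_pow 2 (by omega)).trans pow_padicValNat_dvd
    obtain ⟨t, ht⟩ := hd
    have hlow : 2 < t := by
      refine Nat.lt_of_mul_lt_mul_left (a := 2 ^ (n + 1)) ?_
      rw [← ht]
      have e : 2 ^ (n + 1) * 2 = 4 * 2 ^ n := by ring
      rw [e]; omega
    have hhigh : t < 3 := by
      refine Nat.lt_of_mul_lt_mul_left (a := 2 ^ (n + 1)) ?_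
      rw [← ht]
      have e : 2 ^ (n + 1) * 3 = 6 * 2 ^ n := by ring
      rw [e]; omega
    omega
  have mL := PFAux.L_add_pow m (n + 2) (by omega) (by omega) hv
  have e : m + 2 ^ (n + 2) = 8 * 2 ^ n + j + 1 := by rw [hm]; ring
  have key : PFAux.L (8 * 2 ^ n + j + 1) = PFAux.L (4 * 2 ^ n + j + 1) := by
    rw [← e, mL]
  simp only [pw_eq_L, key]

/-- **Proposition.** The paperfolding word satisfies ♠ with constant `13`. -/
theorem paperfolding_spade {A : Type*} (a b : A) (hab : a ≠ b) :
    Spade (paperfoldingWord a b) 13 := by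
  constructor
  · rintro ⟨N, k, hk, hper⟩
    have hL : ∀ m, N + 1 ≤ m → PFAux.L (m + k) = PFAux.L m := by
      intro m hm
      have h := hper (m - 1) (by omega)
      have h2 := L_eq_of_pw_eq hab _ _ h
      have e1 : m - 1 + k + 1 = m + k := by omega
      have e2 : m - 1 + 1 = m := by omega
      rwa [e1, e2] at h2
    exact PFAux.no_period k hk (PFAux.period_everywhere hL)
  · set ω := paperfoldingWord a b with hω
    refine ⟨fun n => (List.range (4 * 2 ^ n)).map ω,
      fun n => (List.range (2 ^ n)).map (fun j => ω (4 * 2 ^ n + j)),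
      fun n => (List.range (3 * 2 ^ n)).map (fun j => ω (5 * 2 ^ n + j)),
      ?_, ?_, ?_, ?_, ?_⟩
    · intro n
      apply List.ne_nil_of_length_pos
      simp
    · intro n i hlen
      have hB : 0 < 2 ^ n := by positivity
      rw [List.get_eq_getElem]
      simp only [List.length_append, List.length_map, List.length_range] at hlen
      rcases lt_or_ge i (4 * 2 ^ n) with hi | hi
      · rw [List.getElem_append_left (by simpa using hi)]
        simp
      · rw [List.getElem_append_right (by simpa using hi)]
        simp only [List.length_map, List.length_range]
        rcases lt_or_ge (i - 4 * 2 ^ n) (2 ^ n) with hj | hj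
        · rw [List.getElem_append_left (by simpa using hj)]
          rw [List.getElem_map, List.getElem_range]
          congr 1
          omega
        · rw [List.getElem_append_right (by simpa using hj)]
          simp only [List.length_map, List.length_range]
          rcases lt_or_ge (i - 4 * 2 ^ n - 2 ^ n) (3 * 2 ^ n) with hj2 | hj2
          · rw [List.getElem_append_left (by simpa using hj2)]
            rw [List.getElem_map, List.getElem_range]
            congr 1
            omega
          · rw [List.getElem_append_right (by simpa using hj2)]
            rw [List.getElem_map, List.getElem_range]
            simp only [List.length_map, List.length_range]
            have hj'lt : i - 4 * 2 ^ n - 2 ^ n - 3 * 2 ^ n < 2 ^ n := by omega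
            have hieq : i = 8 * 2 ^ n + (i - 4 * 2 ^ n - 2 ^ n - 3 * 2 ^ n) := by omega
            rw [hω]
            conv_rhs => rw [hieq]
            exact (pw_shift a b n _ hj'lt).symm
    · intro n
      have hB : 0 < 2 ^ n := by positivity
      simp only [List.length_map, List.length_range]
      push_cast
      have e : ((2 : ℝ)) ^ n > 0 := by positivity
      nlinarith
    · intro n
      have hB : 0 < 2 ^ n := by positivity
      simp only [List.length_map, List.length_range]
      push_cast
      have e : ((2 : ℝ)) ^ n > 0 := by positivity
      nlinarith
    · intro m
      exact ⟨m, by simpa using Nat.lt_two_pow_self (n := m)⟩
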